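/- arXiv:1703.05306 — 5 statements merged into one kernel-verified Lean document; each statement's English description precedes it below -/
import Mathlib

section
/- Define T : ℕ → ℕ → ℕ recursively by T(m,0) = 0, T(m,m) = 0, and T(m,r) ≤ T(m-1,r-1) + T(m-1,r) + 2^{m-1} for 0 < r < m. Then any function satisfying these relations obeys T(m,r) ≤ 2^m · min(r, m-r). -/
/-- Recursive-encoding complexity bound: any `T` with `T(m,0) = 0`, `T(m,m) = 0`
and `T(m,r) ≤ T(m-1,r-1) + T(m-1,r) + 2^(m-1)` for `0 < r < m` satisfies
`T(m,r) ≤ 2^m · min(r, m-r)`. -/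
theorem encoding_complexity (T : ℕ → ℕ → ℕ)
    (h0 : ∀ m, T m 0 = 0) (hm : ∀ m, T m m = 0)
    (hrec : ∀ m r, 0 < r → r < m →
      T m r ≤ T (m - 1) (r - 1) + T (m - 1) r + 2 ^ (m - 1)) :
    ∀ m r, r ≤ m → T m r ≤ 2 ^ m * min r (m - r) := by
  intro m
  induction m with
  | zero =>
    intro r hr
    interval_cases r
    simp [h0]
  | succ m ih =>
    intro r hr
    rcases Nat.eq_zero_or_pos r with h | h
    · subst h; simp [h0]
    rcases eq_or_lt_of_le hr with h' | h'
    · subst h'; simp [hm]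
    have hr1 : r - 1 ≤ m := by omega
    have hr2 : r ≤ m := by omega
    have H := hrec (m + 1) r h (by omega)
    simp only [Nat.add_sub_cancel] at H
    have h1 := ih (r - 1) hr1
    have h2 := ih r hr2
    have hmin : min (r - 1) (m - (r - 1)) + min r (m - r) + 1
        ≤ 2 * min r (m + 1 - r) := by omega
    calc T (m + 1) r ≤ T m (r - 1) + T m r + 2 ^ m := H
      _ ≤ 2 ^ m * min (r - 1) (m - (r - 1)) + 2 ^ m * min r (m - r) + 2 ^ m := by
          omega
      _ = 2 ^ m * (min (r - 1) (m - (r - 1)) + min r (m - r) + 1) := by ring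
      _ ≤ 2 ^ m * (2 * min r (m + 1 - r)) := Nat.mul_le_mul_left _ hmin
      _ = 2 ^ (m + 1) * min r (m + 1 - r) := by ring
end

section
/- Define D : ℕ → ℕ → ℕ with D(m,0) ≤ 2^m, D(m,m) ≤ 2^m, and D(m,r) ≤ D(m-1,r-1) + D(m-1,r) + 2·2^m for 0 < r < m. Then D(m,r) ≤ 4·2^m·min(r,m-r) + 2^m. -/
/-- Recursive-decoding complexity bound for algorithm `Ψ`: any `D` with
`D(m,0) ≤ 2^m`, `D(m,m) ≤ 2^m` and
`D(m,r) ≤ D(m-1,r-1) + D(m-1,r) + 2·2^m` for `0 < r < m` satisfies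
`D(m,r) ≤ 4·2^m·min(r, m-r) + 2^m`. -/
theorem decoding_complexity (D : ℕ → ℕ → ℕ)
    (h0 : ∀ m, D m 0 ≤ 2 ^ m) (hm : ∀ m, D m m ≤ 2 ^ m)
    (hrec : ∀ m r, 0 < r → r < m →
      D m r ≤ D (m - 1) (r - 1) + D (m - 1) r + 2 * 2 ^ m) :
    ∀ m r, r ≤ m → D m r ≤ 4 * 2 ^ m * min r (m - r) + 2 ^ m := by
  intro m
  induction m with
  | zero =>
    intro r hr
    interval_cases r
    simpa using h0 0
  | succ n ih =>
    intro r hr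
    rcases Nat.eq_zero_or_pos r with rfl | hr0
    · calc D (n+1) 0 ≤ 2 ^ (n+1) := h0 _
        _ ≤ _ := Nat.le_add_left _ _
    rcases eq_or_lt_of_le hr with heq | hrlt
    · rw [heq]
      exact le_trans (hm _) (Nat.le_add_left _ _)
    · have h1 := ih (r - 1) (by omega)
      have h2 := ih r (by omega)
      have hbound := hrec (n+1) r hr0 hrlt
      simp only [Nat.add_sub_cancel] at hbound
      have hpow : 2 ^ (n+1) = 2 * 2 ^ n := by ring
      rw [hpow] at hbound
      have key2 : min (r - 1) (n + 1 - r) + min r (n - r) + 1 ≤ 2 * min r (n + 1 - r) := by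
        omega
      have : D (n+1) r ≤ (4 * 2 ^ n * min (r-1) (n - (r-1)) + 2 ^ n)
          + (4 * 2 ^ n * min r (n - r) + 2 ^ n) + 2 * (2 * 2 ^ n) :=
        hbound.trans (add_le_add (add_le_add h1 h2) le_rfl)
      refine this.trans ?_
      have hn : n - (r - 1) = n + 1 - r := by omega
      rw [hn, hpow]
      nlinarith [mul_le_mul_right key2 (4 * 2 ^ n)]
end

section
/- With the variance recursion μ(ξ·0) = (μ(ξ)+1)²−1, μ(ξ·1) = μ(ξ)/2 and initial value ε^{-2}−1, the path ξ*^g = (0^{r-1}, 1^{m-r-g}, 0, 1^g) yields μ(ξ*^g) = 2^{-g}·(((ε^{-2^r} − 1)·2^{r+g-m} + 1)² − 1). -/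
/-- The variance propagated along a binary path `ξ` (read left to right)
starting from the initial variance `μ₀`: a `0`-step maps `μ ↦ (μ+1)² − 1`,
a `1`-step maps `μ ↦ μ/2`. -/
noncomputable def pathVar (μ₀ : ℝ) (ξ : List Bool) : ℝ :=
  ξ.foldl (fun μ b => if b then μ / 2 else (μ + 1) ^ 2 - 1) μ₀

lemma pathVar_append (μ : ℝ) (l₁ l₂ : List Bool) :
    pathVar μ (l₁ ++ l₂) = pathVar (pathVar μ l₁) l₂ := by
  simp [pathVar, List.foldl_append]

lemma pathVar_false (k : ℕ) (μ : ℝ) :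
    pathVar μ (List.replicate k false) = (μ + 1) ^ 2 ^ k - 1 := by
  induction k generalizing μ with
  | zero => simp [pathVar]
  | succ n ih =>
    rw [List.replicate_succ]
    have : pathVar μ (false :: List.replicate n false)
        = pathVar ((μ + 1) ^ 2 - 1) (List.replicate n false) := by
      simp [pathVar]
    rw [this, ih, sub_add_cancel, ← pow_mul]
    congr 2
    rw [pow_succ]
    ring

lemma pathVar_true (k : ℕ) (μ : ℝ) :
    pathVar μ (List.replicate k true) = μ / 2 ^ k := by
  induction k generalizing μ with
  | zero => simp [pathVar]
  | succ n ih =>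
    rw [List.replicate_succ]
    have : pathVar μ (true :: List.replicate n true)
        = pathVar (μ / 2) (List.replicate n true) := by
      simp [pathVar]
    rw [this, ih]
    ring

/-- For the path `ξ*^g = (0^{r-1}, 1^{m-r-g}, 0, 1^g)` with `1 ≤ g ≤ m − r`,
`r ≥ 1`, and initial variance `ε⁻² − 1` (with `0 < ε ≤ 1`), the final variance
equals `2^{-g}·(((ε^{-2^r} − 1)·2^{r+g-m} + 1)² − 1)`. -/
theorem variance_weakest_path_g (ε : ℝ) (hε : 0 < ε) (hε1 : ε ≤ 1)
    (m r g : ℕ) (hr : 1 ≤ r) (hg : 1 ≤ g) (hgm : g ≤ m - r) (hrm : r ≤ m) :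
    pathVar ((ε ^ 2)⁻¹ - 1)
        (List.replicate (r - 1) false ++ List.replicate (m - r - g) true ++
          [false] ++ List.replicate g true) =
      (2 : ℝ) ^ (-(g : ℤ)) *
        ((((ε ^ 2 ^ r)⁻¹ - 1) * (2 : ℝ) ^ ((r : ℤ) + g - m) + 1) ^ 2 - 1) := by
  rw [pathVar_append, pathVar_append, pathVar_append, pathVar_false, pathVar_true,
    pathVar_true]
  have h1 : ((ε ^ 2)⁻¹ - 1 + 1) ^ 2 ^ (r - 1) = (ε ^ 2 ^ r)⁻¹ := by
    rw [sub_add_cancel, ← inv_pow, ← pow_mul]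
    congr 1
    rw [← pow_succ']
    have hrr : r - 1 + 1 = r := by omega
    rw [hrr, inv_pow]
  rw [h1]
  have h2 : pathVar ((ε ^ 2 ^ r)⁻¹ / 2 ^ (m - r - g)) [false]
      = ((ε ^ 2 ^ r)⁻¹ / 2 ^ (m - r - g)) ^ 2 + 2 * ((ε ^ 2 ^ r)⁻¹ / 2 ^ (m - r - g)) := by
    simp [pathVar]; ring
  have hdiv : ((ε ^ 2 ^ r)⁻¹ - 1) / 2 ^ (m - r - g) + 1
      = ((ε ^ 2 ^ r)⁻¹ - 1) * (2 : ℝ) ^ ((r : ℤ) + g - m) + 1 := by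
    congr 1
    rw [div_eq_mul_inv]
    congr 1
    rw [← zpow_natCast (2:ℝ) (m - r - g), ← zpow_neg]
    congr 1
    omega
  have h3 : pathVar (((ε ^ 2 ^ r)⁻¹ - 1) / 2 ^ (m - r - g)) [false]
      = (((ε ^ 2 ^ r)⁻¹ - 1) * (2 : ℝ) ^ ((r : ℤ) + g - m) + 1) ^ 2 - 1 := by
    simp only [pathVar, List.foldl_cons, List.foldl_nil, if_neg Bool.false_ne_true]
    rw [hdiv]
  rw [h3]
  rw [zpow_neg, zpow_natCast]
  ring
end

section
/- Let μ be defined on binary strings by the recursion μ(empty) = μ₀ > 0, μ(ξ·0) = (μ(ξ)+1)²−1, μ(ξ·1) = μ(ξ)/2. Among all binary strings of length m with exactly m−r ones (r ≥ 1 zeros), the string ξ* = (0^r, 1^{m-r}) maximizes μ. -/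
private noncomputable def pvStep (μ : ℝ) (b : Bool) : ℝ :=
  if b then μ / 2 else (μ + 1) ^ 2 - 1

private lemma pathVar_eq (μ₀ : ℝ) (ξ : List Bool) :
    pathVar μ₀ ξ = ξ.foldl pvStep μ₀ := rfl

private lemma pvStep_pos {μ : ℝ} (hμ : 0 < μ) (b : Bool) : 0 < pvStep μ b := by
  cases b with
  | false => show 0 < (μ + 1) ^ 2 - 1; nlinarith
  | true => show 0 < μ / 2; linarith

private lemma foldl_pos {μ : ℝ} (hμ : 0 < μ) (ξ : List Bool) :
    0 < ξ.foldl pvStep μ := by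
  induction ξ generalizing μ with
  | nil => exact hμ
  | cons b t ih => exact ih (pvStep_pos hμ b)

private lemma pvStep_mono {μ μ' : ℝ} (hμ : 0 < μ) (h : μ ≤ μ') (b : Bool) :
    pvStep μ b ≤ pvStep μ' b := by
  cases b <;> simp [pvStep] <;> nlinarith

private lemma foldl_mono {μ μ' : ℝ} (hμ : 0 < μ) (h : μ ≤ μ') (ξ : List Bool) :
    ξ.foldl pvStep μ ≤ ξ.foldl pvStep μ' := by
  induction ξ generalizing μ μ' with
  | nil => exact h
  | cons b t ih => exact ih (pvStep_pos hμ b) (pvStep_mono hμ h b)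

/-- key: pushing a halving past `r` zero-steps: `2·g^r(μ/2) ≤ g^r(μ)`. -/
private lemma key {μ : ℝ} (hμ : 0 < μ) (r : ℕ) :
    (List.replicate r false).foldl pvStep (μ / 2) ≤
      (List.replicate r false).foldl pvStep μ / 2 := by
  induction r generalizing μ with
  | zero => simp
  | succ n ih =>
    simp only [List.replicate_succ, List.foldl_cons]
    have h1 : pvStep (μ / 2) false ≤ pvStep μ false / 2 := by
      simp [pvStep]; nlinarith
    have h2 : 0 < pvStep (μ / 2) false := pvStep_pos (by linarith) false
    calc (List.replicate n false).foldl pvStep (pvStep (μ / 2) false)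
        ≤ (List.replicate n false).foldl pvStep (pvStep μ false / 2) :=
          foldl_mono h2 h1 _
      _ ≤ (List.replicate n false).foldl pvStep (pvStep μ false) / 2 :=
          ih (by have := pvStep_pos hμ false; linarith)

private lemma main_lemma (ξ : List Bool) : ∀ μ : ℝ, 0 < μ →
    ξ.foldl pvStep μ ≤
      (List.replicate (ξ.count false) false ++
        List.replicate (ξ.count true) true).foldl pvStep μ := by
  induction ξ with
  | nil => intro μ _; simp
  | cons b t ih =>
    intro μ hμ
    cases b with
    | false =>
      have hc : (false :: t).count false = t.count false + 1 := by simp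
      have hc' : (false :: t).count true = t.count true := by simp
      rw [hc, hc']
      have : List.replicate (t.count false + 1) false ++
          List.replicate (t.count true) true =
          false :: (List.replicate (t.count false) false ++
            List.replicate (t.count true) true) := by
        rw [List.replicate_succ]; rfl
      rw [this]
      simp only [List.foldl_cons]
      exact ih _ (pvStep_pos hμ false)
    | true =>
      have hc : (true :: t).count false = t.count false := by simp
      have hc' : (true :: t).count true = t.count true + 1 := by simp
      rw [hc, hc']
      simp only [List.foldl_cons, List.foldl_append, List.replicate_succ,
        List.foldl_cons]
      have h1 : t.foldl pvStep (pvStep μ true) ≤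
          (List.replicate (t.count false) false ++
            List.replicate (t.count true) true).foldl pvStep (pvStep μ true) :=
        ih _ (pvStep_pos hμ true)
      rw [List.foldl_append] at h1
      refine h1.trans ?_
      have hk : (List.replicate (t.count false) false).foldl pvStep (μ / 2) ≤
          (List.replicate (t.count false) false).foldl pvStep μ / 2 :=
        key hμ _
      have hpos : 0 < (List.replicate (t.count false) false).foldl pvStep (μ / 2) :=
        foldl_pos (by linarith) _
      have : pvStep μ true = μ / 2 := rfl
      rw [this]
      have h2 : pvStep ((List.replicate (t.count false) false).foldl pvStep μ) true
          = (List.replicate (t.count false) false).foldl pvStep μ / 2 := rfl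
      rw [h2]
      exact foldl_mono hpos hk _

/-- Among all binary strings of length `m` with exactly `r ≥ 1` zeros (i.e.
`m − r` ones), the string `ξ* = (0^r, 1^{m-r})` maximizes the propagated
variance, for any initial variance `μ₀ > 0`. -/
theorem weakest_path_maximal (μ₀ : ℝ) (hμ₀ : 0 < μ₀)
    (m r : ℕ) (hr : 1 ≤ r) (hrm : r ≤ m)
    (ξ : List Bool) (hlen : ξ.length = m) (hcount : ξ.count false = r) :
    pathVar μ₀ ξ ≤
      pathVar μ₀ (List.replicate r false ++ List.replicate (m - r) true) := by
  have hlen' : ξ.count false + ξ.count true = m := by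
    rw [← hlen]
    have := List.length_eq_countP_add_countP (· = false) (l := ξ)
    simp only [List.count]
    rw [this]
    congr 1
    apply List.countP_congr
    intro b _
    cases b <;> simp
  have htrue : ξ.count true = m - r := by omega
  rw [pathVar_eq, pathVar_eq, ← htrue, ← hcount]
  exact main_lemma ξ μ₀ hμ₀
end

section
/- Let 1 ≤ g ≤ √m, r ≥ 2 fixed, and set ε̃_r = (c m 2^{r-m})^{1/2^r} with constant c > 0. Then the variance μ(ξ₁^g) = 2^{-g}(((ε̃_r^{-2^{r-1}} − 1)·2^{r+g-m} + 1)² − 1) satisfies μ(ξ₁^g)·2^{g+2} ≤ 2^{-(m-r)/2 + √m} for all sufficiently large m. -/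
open Real

set_option maxHeartbeats 1000000 in
/-- Chebyshev bound for the short left-end paths of algorithm `Φ`: for fixed
`r ≥ 2` and `c > 0`, with `ε̃_r = (c·m·2^{r-m})^{1/2^r}`, the variance
`μ(ξ₁^g) = 2^{-g}·(((ε̃_r^{-2^{r-1}} − 1)·2^{r+g-m} + 1)² − 1)` satisfies
`μ(ξ₁^g)·2^{g+2} ≤ 2^{-(m-r)/2 + √m}` for all `1 ≤ g ≤ √m` and all
sufficiently large `m`. -/
theorem phi_short_path_bound (c : ℝ) (hc : 0 < c) (r : ℕ) (hr : 2 ≤ r) :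
    ∃ M : ℕ, ∀ m : ℕ, M ≤ m → ∀ g : ℕ, 1 ≤ g → (g : ℝ) ≤ Real.sqrt m →
      let ε : ℝ := (c * m * (2 : ℝ) ^ ((r : ℤ) - m)) ^ ((1 : ℝ) / 2 ^ r)
      let μ : ℝ := (2 : ℝ) ^ (-(g : ℤ)) *
        ((((ε ^ 2 ^ (r - 1))⁻¹ - 1) * (2 : ℝ) ^ ((r : ℤ) + g - m) + 1) ^ 2 - 1)
      μ * 2 ^ (g + 2) ≤ (2 : ℝ) ^ (-((m : ℝ) - r) / 2 + Real.sqrt m) := by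
  obtain ⟨M0, hM0⟩ := exists_nat_ge (144 / c)
  refine ⟨max (max 16 (2 * r)) M0, fun m hm g hg hgs => ?_⟩
  intro ε μ
  have hm16 : (16 : ℝ) ≤ m := by
    have h : (16:ℕ) ≤ m := le_trans (le_trans (le_max_left _ _) (le_max_left _ _)) hm
    exact_mod_cast h
  have hm0 : (0:ℝ) < m := by linarith
  have hrm : (r : ℝ) ≤ m / 2 := by
    have h : 2 * r ≤ m := le_trans (le_trans (le_max_right _ _) (le_max_left _ _)) hm
    have h2 := (Nat.cast_le (α := ℝ)).2 h
    push_cast at h2; linarith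
  have hcm : (144:ℝ) ≤ c * m := by
    have h1 : (144:ℝ)/c ≤ m := le_trans hM0 (by exact_mod_cast le_trans (le_max_right _ _) hm)
    rw [div_le_iff₀ hc] at h1
    linarith [h1, mul_comm c (m:ℝ)]
  have hsqm : Real.sqrt m ≤ m / 4 := by
    have h4 : (4:ℝ) ≤ Real.sqrt m := by
      have h := Real.sqrt_le_sqrt hm16
      rwa [show (16:ℝ) = 4^2 by norm_num, Real.sqrt_sq (by norm_num : (0:ℝ) ≤ 4)] at h
    nlinarith [Real.mul_self_sqrt hm0.le]
  have hgm : (g:ℝ) ≤ m/4 := hgs.trans hsqm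
  have ht : (0:ℝ) < c * m * (2:ℝ) ^ ((r : ℤ) - m) := by positivity
  have key : (ε ^ 2 ^ (r - 1))⁻¹
      = (c*m) ^ (-(1/2) : ℝ) * (2:ℝ) ^ (((m:ℝ) - r)/2) := by
    show (((c * m * (2:ℝ) ^ ((r : ℤ) - m)) ^ ((1:ℝ)/2^r)) ^ (2^(r-1) : ℕ))⁻¹ = _
    rw [← Real.rpow_natCast _ (2^(r-1)), ← Real.rpow_mul ht.le]
    have h2 : (1:ℝ)/2^r * ((2^(r-1) : ℕ) : ℝ) = 1/2 := by
      have hr1 : (2:ℝ)^r = 2 * 2^(r-1) := by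
        rw [← pow_succ']
        congr 1; omega
      push_cast
      rw [hr1]
      have hne : (2:ℝ)^(r-1) ≠ 0 := by positivity
      field_simp
    rw [h2, ← Real.rpow_neg ht.le]
    rw [Real.mul_rpow (by positivity) (by positivity)]
    congr 1
    rw [← Real.rpow_intCast (2:ℝ) ((r:ℤ) - m), ← Real.rpow_mul (by norm_num : (0:ℝ) ≤ 2)]
    congr 1
    push_cast
    ring
  simp only [μ, ε]
  rw [key]
  set s : ℝ := (c*m) ^ (-(1/2) : ℝ) * (2:ℝ) ^ (((m:ℝ) - r)/2) with hsdef
  set P : ℝ := (2:ℝ) ^ ((r : ℤ) + g - m) with hPdef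
  set x : ℝ := (s - 1) * P with hxdef
  set R : ℝ := (2:ℝ) ^ (-((m : ℝ) - r) / 2 + Real.sqrt m) with hRdef
  have hs0 : 0 < s := by rw [hsdef]; positivity
  have hP0 : 0 < P := by rw [hPdef]; positivity
  have hP1 : P ≤ 1 := by
    rw [hPdef]
    apply zpow_le_one_of_nonpos₀ (by norm_num : (1:ℝ) ≤ 2)
    have h : (r:ℝ) + g ≤ m := by linarith
    have h2 : (r:ℤ) + g ≤ m := by exact_mod_cast h
    omega
  have hR0 : 0 < R := Real.rpow_pos_of_pos two_pos _
  have hR1 : R ≤ 1 := by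
    apply Real.rpow_le_one_of_one_le_of_nonpos (by norm_num)
    linarith
  have hsP : s * P ≤ (1/12) * R := by
    have h1 : (c*m) ^ (-(1/2) : ℝ) ≤ 1/12 := by
      have h12 : (12:ℝ) ≤ (c*m) ^ ((1/2):ℝ) := by
        have h := Real.rpow_le_rpow (by norm_num : (0:ℝ) ≤ 144) hcm (by norm_num : (0:ℝ) ≤ 1/2)
        rwa [show (144:ℝ) = 12^(2:ℕ) by norm_num, ← Real.rpow_natCast 12 2,
          ← Real.rpow_mul (by norm_num : (0:ℝ) ≤ 12),
          show ((2:ℕ):ℝ) * (1/2 : ℝ) = 1 by norm_num, Real.rpow_one] at h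
      rw [Real.rpow_neg (by positivity), show (1:ℝ)/12 = 12⁻¹ by norm_num]
      exact inv_anti₀ (by norm_num) h12
    have h2 : (2:ℝ) ^ (((m:ℝ) - r)/2) * P ≤ R := by
      rw [hPdef, hRdef, ← Real.rpow_intCast (2:ℝ) ((r:ℤ) + g - m),
        ← Real.rpow_add two_pos]
      apply Real.rpow_le_rpow_left_iff (by norm_num : (1:ℝ) < 2) |>.2
      push_cast
      linarith
    calc s * P = (c*m) ^ (-(1/2) : ℝ) * ((2:ℝ) ^ (((m:ℝ) - r)/2) * P) := by
          rw [hsdef]; ring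
      _ ≤ (1/12) * R := by
          apply mul_le_mul h1 h2 (by positivity) (by norm_num)
  have hxle : x ≤ s * P := by
    rw [hxdef]
    exact mul_le_mul_of_nonneg_right (by linarith) hP0.le
  clear_value x R s P
  clear hsdef hPdef hRdef key μ ε
  have h4 : (2:ℝ)^(-(g:ℤ)) * (2:ℝ)^(g+2) = 4 := by
    rw [← zpow_natCast (2:ℝ) (g+2), ← zpow_add₀ (two_ne_zero)]
    norm_num
  calc (2:ℝ)^(-(g:ℤ)) * ((x + 1)^2 - 1) * 2^(g+2)
      = ((2:ℝ)^(-(g:ℤ)) * 2^(g+2)) * ((x+1)^2-1) := by ring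
    _ = 4 * ((x+1)^2 - 1) := by rw [h4]
    _ ≤ R := by
        rcases le_or_gt x 0 with hx0 | hx0
        · have hs1 : s ≤ 1 := by nlinarith
          have hxm1 : s - 1 ≤ x := by
            have := mul_le_mul_of_nonpos_left hP1 (by linarith : s - 1 ≤ 0)
            rw [mul_one] at this
            rw [hxdef]; linarith
          have hxx : x * (x + 2) ≤ 0 :=
            mul_nonpos_of_nonpos_of_nonneg hx0 (by nlinarith)
          nlinarith
        · have hxu : x ≤ R/12 := by linarith
          have hxx : x * x ≤ (R/12) * (R/12) := mul_self_le_mul_self hx0.le hxu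
          nlinarith
end
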